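/- With ê_m the orthonormal basis of Q^{odd} given by ê_m = (2^{−δ_{k,m}/2}/√k)(sin((2n−1)mπ/(2k)))_{n=1}^{2k} and M_ν the cyclic shift on ℝ^{2k}, one has ⟨ê_j, M_ν^n ê_m⟩ = 0 for j ≠ m (1 ≤ n, j, m ≤ k), and ⟨ê_m, M_ν^n ê_m⟩ = cos(π n m / k). Consequently, for q = Σ_{m=1}^k q̂_m ê_m ∈ Q^{odd}, the vector f(q) = (⟨q, M_ν^s q⟩)_{s=1}^k equals W (q̂_1^2, ..., q̂_k^2)^T where W = (cos(πnm/k))_{n,m=1}^k. -/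

import Mathlib

lemma sin_mul_sin' (A B : ℝ) :
    Real.sin A * Real.sin B = (Real.cos (A - B) - Real.cos (A + B)) / 2 := by
  rw [Real.cos_sub, Real.cos_add]; ring

lemma cos_sum_helper (N : ℕ) (θ φ : ℝ)
    (h1 : Complex.exp (θ * Complex.I) ≠ 1)
    (h2 : Complex.exp (θ * Complex.I) ^ N = 1) :
    ∑ i : Fin N, Real.cos ((i : ℕ) * θ + φ) = 0 := by
  have key : ∀ i : Fin N, Real.cos ((i : ℕ) * θ + φ)
      = (Complex.exp (↑φ * Complex.I) * Complex.exp (↑θ * Complex.I) ^ (i : ℕ)).re := by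
    intro i
    rw [← Complex.exp_nat_mul, ← Complex.exp_add,
      show (↑φ * Complex.I + ((i:ℕ):ℂ) * (↑θ * Complex.I)) = (((i:ℕ) * θ + φ : ℝ) : ℂ) * Complex.I by
        push_cast; ring, Complex.exp_ofReal_mul_I_re]
  simp_rw [key]
  rw [← Complex.re_sum, ← Finset.mul_sum, Fin.sum_univ_eq_sum_range, geom_sum_eq h1, h2]
  simp

lemma cos_sum_const (N : ℕ) (θ φ : ℝ) (t : ℤ) (hθ : θ = t * (2 * Real.pi)) :
    ∑ i : Fin N, Real.cos ((i : ℕ) * θ + φ) = N * Real.cos φ := by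
  have h : ∀ i : Fin N, Real.cos ((i : ℕ) * θ + φ) = Real.cos φ := by
    intro i
    rw [hθ, show ((i:ℕ) : ℝ) * (t * (2 * Real.pi)) + φ = φ + ((i : ℕ) * t : ℤ) * (2 * Real.pi) by
      push_cast; ring, Real.cos_add_int_mul_two_pi]
  simp [h, Finset.sum_const, Finset.card_univ]

lemma not_dvd_aux (k : ℕ) (a : ℤ) (h1 : a ≠ 0) (h2 : a.natAbs < 2 * k) :
    ¬ (2 * (k : ℤ)) ∣ a := by
  intro h
  have := Int.le_of_dvd (abs_pos.mpr h1) ((dvd_abs _ _).mpr h)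
  rw [Int.abs_eq_natAbs] at this
  omega

lemma exp_ne_one (k : ℕ) (hk : 0 < k) (a : ℤ) (ha : ¬ (2 * (k : ℤ)) ∣ a) :
    Complex.exp ((((a : ℝ) * Real.pi / k : ℝ) : ℂ) * Complex.I) ≠ 1 := by
  intro h
  rw [Complex.exp_eq_one_iff] at h
  obtain ⟨t, ht⟩ := h
  have him := congrArg Complex.im ht
  simp at him
  apply ha
  have hk0 : (k : ℝ) ≠ 0 := Nat.cast_ne_zero.mpr hk.ne'
  rw [div_eq_iff hk0] at him
  have : (a : ℝ) = 2 * k * t := by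
    apply mul_right_cancel₀ Real.pi_ne_zero
    linear_combination him
  exact ⟨t, by exact_mod_cast this⟩

lemma exp_pow_eq_one (k : ℕ) (hk : 0 < k) (a : ℤ) :
    Complex.exp ((((a : ℝ) * Real.pi / k : ℝ) : ℂ) * Complex.I) ^ (2 * k) = 1 := by
  have hk0 : (k : ℂ) ≠ 0 := Nat.cast_ne_zero.mpr hk.ne'
  rw [← Complex.exp_nat_mul,
    show ((2 * k : ℕ) : ℂ) * ((((a : ℝ) * Real.pi / k : ℝ) : ℂ) * Complex.I)
      = (a : ℂ) * (2 * (Real.pi : ℂ) * Complex.I) by push_cast; field_simp]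
  exact_mod_cast Complex.exp_int_mul_two_pi_mul_I a

lemma cos_sum_zero' (k : ℕ) (hk : 0 < k) (a : ℤ) (φ : ℝ) (ha : ¬ (2 * (k : ℤ)) ∣ a) :
    ∑ i : Fin (2 * k), Real.cos ((i : ℕ) * ((a : ℝ) * Real.pi / k) + φ) = 0 :=
  cos_sum_helper _ _ _ (exp_ne_one k hk a ha) (exp_pow_eq_one k hk a)

lemma key_sum (k n j m : ℕ) (hk : 0 < k) (hj1 : 1 ≤ j) (hjk : j ≤ k)
    (hm1 : 1 ≤ m) (hmk : m ≤ k) :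
    ∑ i : Fin (2 * k),
        Real.sin ((2 * ((i : ℕ) : ℝ) + 1) * j * Real.pi / (2 * k))
          * Real.sin ((2 * (((i : ℕ) : ℝ) + n) + 1) * m * Real.pi / (2 * k))
      = if j = m then (if m = k then (2 : ℝ) else 1) * k * Real.cos (Real.pi * n * m / k)
        else 0 := by
  have hk0 : (k : ℝ) ≠ 0 := Nat.cast_ne_zero.mpr hk.ne'
  have hstep : ∀ i : Fin (2 * k),
      Real.sin ((2 * ((i : ℕ) : ℝ) + 1) * j * Real.pi / (2 * k))
        * Real.sin ((2 * (((i : ℕ) : ℝ) + n) + 1) * m * Real.pi / (2 * k))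
      = (Real.cos ((i : ℕ) * ((((j : ℤ) - m : ℤ) : ℝ) * Real.pi / k)
            + ((j : ℝ) - (2 * n + 1) * m) * Real.pi / (2 * k))
         - Real.cos ((i : ℕ) * ((((j : ℤ) + m : ℤ) : ℝ) * Real.pi / k)
            + ((j : ℝ) + (2 * n + 1) * m) * Real.pi / (2 * k))) / 2 := by
    intro i
    rw [sin_mul_sin']
    congr 3
    · push_cast; field_simp; ring
    · push_cast; field_simp; ring
  rw [Finset.sum_congr rfl fun i _ => hstep i, ← Finset.sum_div, Finset.sum_sub_distrib]
  by_cases hjm : j = m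
  · subst hjm
    rw [if_pos rfl]
    by_cases hjk' : j = k
    · subst hjk'
      rw [if_pos rfl]
      rw [cos_sum_const _ _ _ 0 (by push_cast; ring),
          cos_sum_const _ _ _ 1 (by push_cast; field_simp; ring)]
      have e1 : ((j : ℝ) - (2 * n + 1) * j) * Real.pi / (2 * j) = -(Real.pi * n) := by
        field_simp; ring
      have e2 : ((j : ℝ) + (2 * n + 1) * j) * Real.pi / (2 * j) = Real.pi * n + Real.pi := by
        field_simp; ring
      have e3 : Real.pi * n * j / j = Real.pi * n := by
        rw [mul_div_assoc, div_self hk0, mul_one]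
      rw [e1, e2, e3, Real.cos_neg, Real.cos_add_pi]
      push_cast; ring
    · rw [if_neg hjk']
      rw [cos_sum_const _ _ _ 0 (by push_cast; ring),
          cos_sum_zero' k hk ((j : ℤ) + j) _ (not_dvd_aux k _ (by omega) (by omega))]
      have e1 : ((j : ℝ) - (2 * n + 1) * j) * Real.pi / (2 * k) = -(Real.pi * n * j / k) := by
        field_simp; ring
      rw [e1, Real.cos_neg]
      push_cast; ring
  · rw [if_neg hjm]
    rw [cos_sum_zero' k hk ((j : ℤ) - m) _ (not_dvd_aux k _ (by omega) (by omega)),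
        cos_sum_zero' k hk ((j : ℤ) + m) _ (not_dvd_aux k _ (by omega) (by omega))]
    simp

/-- With `ê_m = (2^{-δ_{k,m}/2}/√k)(sin((2n-1)mπ/(2k)))_{n=1}^{2k}` the
orthonormal basis of `Q^{odd}` and `M_ν` the cyclic shift on `ℝ^{2k}`:
`⟨ê_j, M_ν^n ê_m⟩ = 0` for `j ≠ m`, `⟨ê_m, M_ν^n ê_m⟩ = cos(πnm/k)`, and hence
for `q = Σ q̂_m ê_m`, `f(q) = (⟨q, M_ν^s q⟩)_{s=1}^k = W (q̂_1^2,...,q̂_k^2)ᵀ`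
with `W = (cos(πnm/k))`. -/
theorem ehat_shift_inner_products (k : ℕ) (hk : 1 ≤ k)
    (ehat : ℕ → Fin (2 * k) → ℝ)
    (hehat : ∀ (m : ℕ) (j : Fin (2 * k)),
      ehat m j = ((2 : ℝ) ^ (-(if m = k then (1 : ℝ) else 0) / 2) / Real.sqrt k)
        * Real.sin ((2 * (j : ℕ) + 1) * m * Real.pi / (2 * k)))
    (shift : ℕ → Fin (2 * k) → Fin (2 * k))
    (hshift : ∀ (s : ℕ) (j : Fin (2 * k)),
      shift s j = ⟨((j : ℕ) + s) % (2 * k),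
        Nat.mod_lt _ (Nat.lt_of_le_of_lt (Nat.zero_le _) j.2)⟩) :
    (∀ n j m : ℕ, 1 ≤ n → n ≤ k → 1 ≤ j → j ≤ k → 1 ≤ m → m ≤ k → j ≠ m →
      ∑ i : Fin (2 * k), ehat j i * ehat m (shift n i) = 0) ∧
    (∀ n m : ℕ, 1 ≤ n → n ≤ k → 1 ≤ m → m ≤ k →
      ∑ i : Fin (2 * k), ehat m i * ehat m (shift n i)
        = Real.cos (Real.pi * n * m / k)) ∧
    (∀ qhat : Fin k → ℝ, ∀ s : ℕ, 1 ≤ s → s ≤ k →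
      ∑ i : Fin (2 * k),
          (∑ m : Fin k, qhat m * ehat ((m : ℕ) + 1) i)
            * (∑ m : Fin k, qhat m * ehat ((m : ℕ) + 1) (shift s i))
        = ∑ m : Fin k, Real.cos (Real.pi * s * ((m : ℕ) + 1) / k) * qhat m ^ 2) := by
  have hk' : 0 < k := hk
  have hk0 : (k : ℝ) ≠ 0 := Nat.cast_ne_zero.mpr hk'.ne'
  have h2k0 : (2 * k : ℝ) ≠ 0 := by positivity
  -- periodicity: shifted ehat
  have hper : ∀ (s : ℕ) (m' : ℕ) (i : Fin (2 * k)),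
      ehat m' (shift s i)
        = ((2 : ℝ) ^ (-(if m' = k then (1 : ℝ) else 0) / 2) / Real.sqrt k)
          * Real.sin ((2 * (((i : ℕ) : ℝ) + s) + 1) * m' * Real.pi / (2 * k)) := by
    intro s m' i
    rw [hshift, hehat]
    congr 1
    have hq := Nat.mod_add_div ((i : ℕ) + s) (2 * k)
    set t := ((i : ℕ) + s) / (2 * k) with ht
    have hcast : ((((i : ℕ) + s) % (2 * k) : ℕ) : ℝ) = (i : ℕ) + (s : ℝ) - 2 * k * t := by
      have : ((((i : ℕ) + s) % (2 * k) + 2 * k * t : ℕ) : ℝ) = (((i : ℕ) + s : ℕ) : ℝ) := by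
        exact_mod_cast congrArg (Nat.cast : ℕ → ℝ) hq
      push_cast at this ⊢
      linarith
    rw [show (2 * (((i : ℕ) : ℝ) + s) + 1) * m' * Real.pi / (2 * k)
        = (2 * ((((i : ℕ) + s) % (2 * k) : ℕ) : ℝ) + 1) * m' * Real.pi / (2 * k)
          + ((t * m' : ℕ) : ℤ) * (2 * Real.pi) by
      rw [hcast]; push_cast; field_simp; ring]
    rw [Real.sin_add_int_mul_two_pi]
  -- rpow constants
  have hsq : Real.sqrt k * Real.sqrt k = (k : ℝ) := Real.mul_self_sqrt (Nat.cast_nonneg k)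
  have hsqrt0 : Real.sqrt k ≠ 0 := by
    intro h; rw [h, mul_zero] at hsq; exact hk0 hsq.symm
  -- main inner product computation
  have hP : ∀ (s j' m' : ℕ), 1 ≤ s → s ≤ k → 1 ≤ j' → j' ≤ k → 1 ≤ m' → m' ≤ k →
      ∑ i : Fin (2 * k), ehat j' i * ehat m' (shift s i)
        = if j' = m' then Real.cos (Real.pi * s * m' / k) else 0 := by
    intro s j' m' hs1 hs2 hj'1 hj'2 hm'1 hm'2
    have hterm : ∀ i : Fin (2 * k), ehat j' i * ehat m' (shift s i)
        = (((2 : ℝ) ^ (-(if j' = k then (1 : ℝ) else 0) / 2) / Real.sqrt k)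
            * ((2 : ℝ) ^ (-(if m' = k then (1 : ℝ) else 0) / 2) / Real.sqrt k))
          * (Real.sin ((2 * ((i : ℕ) : ℝ) + 1) * j' * Real.pi / (2 * k))
            * Real.sin ((2 * (((i : ℕ) : ℝ) + s) + 1) * m' * Real.pi / (2 * k))) := by
      intro i
      rw [hehat, hper]
      ring
    rw [Finset.sum_congr rfl fun i _ => hterm i, ← Finset.mul_sum,
      key_sum k s j' m' hk' hj'1 hj'2 hm'1 hm'2]
    by_cases hjm : j' = m'
    · subst hjm
      rw [if_pos rfl, if_pos rfl]
      by_cases hjk : j' = k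
      · subst hjk
        rw [if_pos rfl, if_pos rfl]
        have h2 : (2 : ℝ) ^ (-(1 : ℝ) / 2) * (2 : ℝ) ^ (-(1 : ℝ) / 2) = 1 / 2 := by
          rw [← Real.rpow_add two_pos]; norm_num
        rw [div_mul_div_comm, h2, hsq]
        field_simp
      · rw [if_neg hjk, if_neg hjk]
        have h1 : (2 : ℝ) ^ (-(0 : ℝ) / 2) = 1 := by norm_num
        rw [h1]
        field_simp
        rw [Real.sq_sqrt (Nat.cast_nonneg k)]
    · rw [if_neg hjm, if_neg hjm, mul_zero]
  refine ⟨?_, ?_, ?_⟩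
  · intro n j m hn1 hn2 hj1 hj2 hm1 hm2 hjm
    rw [hP n j m hn1 hn2 hj1 hj2 hm1 hm2, if_neg hjm]
  · intro n m hn1 hn2 hm1 hm2
    rw [hP n m m hn1 hn2 hm1 hm2 hm1 hm2, if_pos rfl]
  · intro qhat s hs1 hs2
    have expand : ∑ i : Fin (2 * k),
        (∑ m : Fin k, qhat m * ehat ((m : ℕ) + 1) i)
          * (∑ m : Fin k, qhat m * ehat ((m : ℕ) + 1) (shift s i))
      = ∑ m : Fin k, ∑ m' : Fin k, (qhat m * qhat m')
          * ∑ i : Fin (2 * k), ehat ((m : ℕ) + 1) i * ehat ((m' : ℕ) + 1) (shift s i) := by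
      simp_rw [Finset.sum_mul_sum, Finset.mul_sum]
      rw [Finset.sum_comm]
      refine Finset.sum_congr rfl fun m _ => ?_
      rw [Finset.sum_comm]
      refine Finset.sum_congr rfl fun m' _ => ?_
      refine Finset.sum_congr rfl fun i _ => ?_
      ring
    rw [expand]
    have hval : ∀ m m' : Fin k,
        ∑ i : Fin (2 * k), ehat ((m : ℕ) + 1) i * ehat ((m' : ℕ) + 1) (shift s i)
          = if m' = m then Real.cos (Real.pi * s * ((m : ℕ) + 1) / k) else 0 := by
      intro m m'
      rw [hP s ((m : ℕ) + 1) ((m' : ℕ) + 1) hs1 hs2 (by omega) (by omega) (by omega)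
        (by omega)]
      by_cases h : (m : ℕ) + 1 = (m' : ℕ) + 1
      · have : m' = m := by
          apply Fin.ext; omega
        rw [if_pos h, if_pos this, this]
        push_cast
        ring_nf
      · rw [if_neg h, if_neg (by intro hh; exact h (by rw [hh]))]
    simp_rw [hval, mul_ite, mul_zero, Finset.sum_ite_eq', Finset.mem_univ, if_true]
    refine Finset.sum_congr rfl fun m _ => ?_
    ring
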